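/- Let F be a field, let A, B ∈ F, and let (x_n)_{n≥0} be a sequence of nonzero elements of F satisfying the trilinear Boussinesq recurrence x_{n+3}(A·x_{n+1}·x_{n+5} + B·x_{n+2}·x_{n+4}) + x_n·x_{n+4}·x_{n+5} + x_{n+1}·x_{n+2}·x_{n+6} = 0 for all n ≥ 0. Define I_n := (A² + B)·x_n·x_{n+5}/(x_{n+2}·x_{n+3}) + A·B·(x_n·x_{n+4}/(x_{n+1}·x_{n+3}) + x_{n+1}·x_{n+5}/(x_{n+2}·x_{n+4})) + A·(x_n·x_{n+5}/(x_{n+2}·x_{n+3}))·(x_n·x_{n+4}/(x_{n+1}·x_{n+3}) + x_{n+1}·x_{n+5}/(x_{n+2}·x_{n+4})) + (x_n·x_{n+5}/(x_{n+2}·x_{n+3}))². Then I_{n+1} = I_n for all n ≥ 0, i.e. I is an integral (invariant) of the six-dimensional map defined by the recurrence. -/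

import Mathlib

/-- The first integral (from the second conservation law) of the six-dimensional
trilinear Boussinesq map, as a function of six consecutive terms. -/
noncomputable def triBSQIntI {F : Type*} [Field F] (A B : F) (x : ℕ → F) (n : ℕ) : F :=
  (A ^ 2 + B) * x n * x (n + 5) / (x (n + 2) * x (n + 3)) +
    A * B * (x n * x (n + 4) / (x (n + 1) * x (n + 3)) +
      x (n + 1) * x (n + 5) / (x (n + 2) * x (n + 4))) +
    A * (x n * x (n + 5) / (x (n + 2) * x (n + 3))) *
      (x n * x (n + 4) / (x (n + 1) * x (n + 3)) +
        x (n + 1) * x (n + 5) / (x (n + 2) * x (n + 4))) +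
    (x n * x (n + 5) / (x (n + 2) * x (n + 3))) ^ 2


private lemma triBSQ_aux {F : Type*} [Field F] (A B x0 x1 x2 x3 x4 x5 x6 : F)
    (h0 : x0 ≠ 0) (h1 : x1 ≠ 0) (h2 : x2 ≠ 0) (h3 : x3 ≠ 0) (h4 : x4 ≠ 0) (h5 : x5 ≠ 0)
    (h : x3 * (A * x1 * x5 + B * x2 * x4) + x0 * x4 * x5 + x1 * x2 * x6 = 0) :
    (A ^ 2 + B) * x1 * x6 / (x3 * x4) +
      A * B * (x1 * x5 / (x2 * x4) + x2 * x6 / (x3 * x5)) +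
      A * (x1 * x6 / (x3 * x4)) * (x1 * x5 / (x2 * x4) + x2 * x6 / (x3 * x5)) +
      (x1 * x6 / (x3 * x4)) ^ 2 =
    (A ^ 2 + B) * x0 * x5 / (x2 * x3) +
      A * B * (x0 * x4 / (x1 * x3) + x1 * x5 / (x2 * x4)) +
      A * (x0 * x5 / (x2 * x3)) * (x0 * x4 / (x1 * x3) + x1 * x5 / (x2 * x4)) +
      (x0 * x5 / (x2 * x3)) ^ 2 := by
  field_simp
  linear_combination (A * x2 * x4 + x1 * x5) * (x1 * x2 * x6 - x0 * x4 * x5) * h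

/-- for any nonvanishing solution of the trilinear Boussinesq recurrence
`x (n+3) (A x (n+1) x (n+5) + B x (n+2) x (n+4)) + x n x (n+4) x (n+5)
+ x (n+1) x (n+2) x (n+6) = 0`, the quantity `I_n` is an invariant. -/
theorem stmt_15 {F : Type*} [Field F] (A B : F) (x : ℕ → F)
    (hne : ∀ n : ℕ, x n ≠ 0)
    (hrec : ∀ n : ℕ,
      x (n + 3) * (A * x (n + 1) * x (n + 5) + B * x (n + 2) * x (n + 4)) +
        x n * x (n + 4) * x (n + 5) + x (n + 1) * x (n + 2) * x (n + 6) = 0) :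
    ∀ n : ℕ, triBSQIntI A B x (n + 1) = triBSQIntI A B x n := by
  intro n
  have := triBSQ_aux A B (x n) (x (n+1)) (x (n+2)) (x (n+3)) (x (n+4)) (x (n+5)) (x (n+6))
    (hne n) (hne (n+1)) (hne (n+2)) (hne (n+3)) (hne (n+4)) (hne (n+5)) (hrec n)
  simpa only [triBSQIntI, show n + 1 + 1 = n + 2 from rfl, show n + 1 + 2 = n + 3 from rfl,
    show n + 1 + 3 = n + 4 from rfl, show n + 1 + 4 = n + 5 from rfl,
    show n + 1 + 5 = n + 6 from rfl] using this
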